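/- Let n ≥ 1, let · be a quasigroup operation of order n on Fin n, let σ be a complete mapping of (Fin n, ·), and let x₀ ∈ Fin n. Then the Belyavskaya prolongation ∗ of (Fin n, ·) along σ with excluded element x₀ is a quasigroup operation of order n+1 on Fin (n+1); that is, for every a ∈ Fin (n+1) the maps x ↦ a∗x and x ↦ x∗a are bijections of Fin (n+1). -/
import Mathlib


/-- A binary operation on `Fin m` is a quasigroup operation if all left and
right translations are bijections. -/
def IsQuasigroup {m : ℕ} (f : Fin m → Fin m → Fin m) : Prop :=
  ∀ a : Fin m, Function.Bijective (fun x => f a x) ∧ Function.Bijective (fun x => f x a)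

/-- Extend a permutation of `Fin n` to `Fin (n+1)` fixing the last element. -/
def extPerm {n : ℕ} (g : Equiv.Perm (Fin n)) : Equiv.Perm (Fin (n+1)) :=
  (finSuccEquivLast).trans (g.optionCongr.trans finSuccEquivLast.symm)

lemma extPerm_castSucc {n : ℕ} (g : Equiv.Perm (Fin n)) (x : Fin n) :
    extPerm g x.castSucc = (g x).castSucc := by
  simp [extPerm]

lemma extPerm_last {n : ℕ} (g : Equiv.Perm (Fin n)) :
    extPerm g (Fin.last n) = Fin.last n := by
  simp [extPerm]

/-- **Belyavskaya prolongation.**  Let `f` be a quasigroup operation of order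
`n ≥ 1` on `Fin n`, `σ` a complete mapping of `(Fin n, f)` (i.e. `x ↦ f x (σ x)`
is a bijection), and `x₀ ∈ Fin n`.  Then the Belyavskaya prolongation `star` of
`f` along `σ` with excluded element `x₀` (characterized cell-by-cell by
`h1`–`h8`, with `Fin n` identified with the first `n` elements of `Fin (n+1)`
and `e = Fin.last n`) is a quasigroup operation of order `n+1` on `Fin (n+1)`. -/
theorem belyavskaya_prolongation_isQuasigroup
    (n : ℕ) (hn : 1 ≤ n)
    (f : Fin n → Fin n → Fin n) (hf : IsQuasigroup f)
    (σ : Equiv.Perm (Fin n))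
    (hσ : Function.Bijective (fun x => f x (σ x)))
    (x₀ : Fin n)
    (star : Fin (n + 1) → Fin (n + 1) → Fin (n + 1))
    (h1 : ∀ x y : Fin n, y ≠ σ x →
      star x.castSucc y.castSucc = (f x y).castSucc)
    (h2 : ∀ x : Fin n, x ≠ x₀ → star x.castSucc (σ x).castSucc = Fin.last n)
    (h3 : ∀ x : Fin n, x ≠ x₀ →
      star x.castSucc (Fin.last n) = (f x (σ x)).castSucc)
    (h4 : ∀ x : Fin n, x ≠ x₀ →
      star (Fin.last n) (σ x).castSucc = (f x (σ x)).castSucc)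
    (h5 : star x₀.castSucc (σ x₀).castSucc = (f x₀ (σ x₀)).castSucc)
    (h6 : star x₀.castSucc (Fin.last n) = Fin.last n)
    (h7 : star (Fin.last n) (σ x₀).castSucc = Fin.last n)
    (h8 : star (Fin.last n) (Fin.last n) = (f x₀ (σ x₀)).castSucc) :
    IsQuasigroup star := by
  classical
  have csne : ∀ z : Fin n, z.castSucc ≠ Fin.last n :=
    fun z => (Fin.castSucc_lt_last z).ne
  have csinj : ∀ {a b : Fin n}, a.castSucc = b.castSucc → a = b :=
    fun h => Fin.castSucc_injective n h
  intro a
  constructor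
  · -- left translations (rows)
    induction a using Fin.lastCases with
    | last =>
      -- row of e  :  (σ x).castSucc ↦ (f x (σ x)).castSucc after a swap
      have key : (fun z => star (Fin.last n) z)
          = ⇑((extPerm (σ.symm.trans (Equiv.ofBijective _ hσ))).trans
              (Equiv.swap (Fin.last n) ((f x₀ (σ x₀)).castSucc))) := by
        funext z
        induction z using Fin.lastCases with
        | last =>
          simp only [Equiv.trans_apply, extPerm_last, Equiv.swap_apply_left, h8]
        | cast y =>
          simp only [Equiv.trans_apply, extPerm_castSucc, Equiv.ofBijective_apply]
          rcases eq_or_ne (σ.symm y) x₀ with h | h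
          · have hy : y = σ x₀ := by rw [← h]; simp
            subst hy
            simp only [Equiv.symm_apply_apply]
            rw [h7]
            exact (Equiv.swap_apply_right _ _).symm
          · obtain ⟨x, rfl⟩ : ∃ x, y = σ x := ⟨σ.symm y, by simp⟩
            rw [Equiv.symm_apply_apply] at h
            simp only [Equiv.symm_apply_apply]
            rw [h4 x h]
            exact (Equiv.swap_apply_of_ne_of_ne (csne _)
              fun hc => h (hσ.injective (csinj hc))).symm
      rw [key]
      exact Equiv.bijective _
    | cast x =>
      rcases eq_or_ne x x₀ with rfl | hx
      · -- row of x₀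
        have key : (fun z => star x.castSucc z)
            = ⇑(extPerm (Equiv.ofBijective _ (hf x).1)) := by
          funext z
          induction z using Fin.lastCases with
          | last => rw [h6, extPerm_last]
          | cast y =>
            simp only [extPerm_castSucc, Equiv.ofBijective_apply]
            rcases eq_or_ne y (σ x) with rfl | hy
            · exact h5
            · exact h1 x y hy
        rw [key]; exact Equiv.bijective _
      · -- generic row
        have key : (fun z => star x.castSucc z)
            = ⇑((extPerm (Equiv.ofBijective _ (hf x).1)).trans
                (Equiv.swap (Fin.last n) ((f x (σ x)).castSucc))) := by
          funext z
          induction z using Fin.lastCases with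
          | last =>
            simp only [Equiv.trans_apply, extPerm_last, Equiv.swap_apply_left]
            exact h3 x hx
          | cast y =>
            simp only [Equiv.trans_apply, extPerm_castSucc, Equiv.ofBijective_apply]
            rcases eq_or_ne y (σ x) with rfl | hy
            · rw [h2 x hx]
              exact (Equiv.swap_apply_right _ _).symm
            · rw [h1 x y hy]
              exact (Equiv.swap_apply_of_ne_of_ne (csne _)
                fun hc => hy ((hf x).1.injective (csinj hc))).symm
        rw [key]; exact Equiv.bijective _
  · -- right translations (columns)
    induction a using Fin.lastCases with
    | last =>
      -- column of e
      have key : (fun z => star z (Fin.last n))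
          = ⇑((extPerm (Equiv.ofBijective _ hσ)).trans
              (Equiv.swap (Fin.last n) ((f x₀ (σ x₀)).castSucc))) := by
        funext z
        induction z using Fin.lastCases with
        | last =>
          simp only [Equiv.trans_apply, extPerm_last, Equiv.swap_apply_left, h8]
        | cast x =>
          simp only [Equiv.trans_apply, extPerm_castSucc, Equiv.ofBijective_apply]
          rcases eq_or_ne x x₀ with rfl | hx
          · rw [h6]
            exact (Equiv.swap_apply_right _ _).symm
          · rw [h3 x hx]
            exact (Equiv.swap_apply_of_ne_of_ne (csne _)
              fun hc => hx (hσ.injective (csinj hc))).symm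
      rw [key]; exact Equiv.bijective _
    | cast y =>
      rcases eq_or_ne (σ.symm y) x₀ with h | h
      · -- column of σ x₀
        have hy : y = σ x₀ := by rw [← h]; simp
        subst hy
        have key : (fun z => star z (σ x₀).castSucc)
            = ⇑(extPerm (Equiv.ofBijective _ (hf (σ x₀)).2)) := by
          funext z
          induction z using Fin.lastCases with
          | last => rw [h7, extPerm_last]
          | cast x =>
            simp only [extPerm_castSucc, Equiv.ofBijective_apply]
            rcases eq_or_ne x x₀ with rfl | hx
            · exact h5
            · refine h1 x (σ x₀) fun hc => hx (σ.injective hc).symm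
        rw [key]; exact Equiv.bijective _
      · -- generic column
        obtain ⟨b, rfl⟩ : ∃ b, y = σ b := ⟨σ.symm y, by simp⟩
        rw [Equiv.symm_apply_apply] at h
        have key : (fun z => star z (σ b).castSucc)
            = ⇑((extPerm (Equiv.ofBijective _ (hf (σ b)).2)).trans
                (Equiv.swap (Fin.last n) ((f b (σ b)).castSucc))) := by
          funext z
          induction z using Fin.lastCases with
          | last =>
            simp only [Equiv.trans_apply, extPerm_last, Equiv.swap_apply_left]
            exact h4 b h
          | cast x =>
            simp only [Equiv.trans_apply, extPerm_castSucc, Equiv.ofBijective_apply]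
            rcases eq_or_ne x b with rfl | hx
            · rw [h2 x h]
              exact (Equiv.swap_apply_right _ _).symm
            · rw [h1 x (σ b) fun hc => hx (σ.injective hc).symm]
              exact (Equiv.swap_apply_of_ne_of_ne (csne _)
                fun hc => hx ((hf (σ b)).2.injective (csinj hc))).symm
        rw [key]; exact Equiv.bijective _
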